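/- Let b_0, …, b_{m−1} ≥ 0, ε > 0, and γ > 0, and suppose positive reals λ̃_1, …, λ̃_m with λ̃_i ≥ γ satisfy, for every index j, Σ_{k=0}^{m−1} (b_k / C(m, m−k)) · e_{m−k}(1/λ̃ with index j omitted) ≤ 1. Set λ'_i = λ̃_i + γ. Then there exists ε' > 0, depending only on m, the b_k, and γ (and not on the λ̃_i), such that for every index j, Σ_{k=0}^{m−1} (b_k / C(m, m−k)) · e_{m−k}(1/λ' with index j omitted) ≤ 1 − ε'. -/

import Mathlib

/-- `k`-th elementary symmetric polynomial of `x` over the index set `s`. -/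
def esymFin {m : ℕ} (s : Finset (Fin m)) (k : ℕ) (x : Fin m → ℝ) : ℝ :=
  ∑ t ∈ s.powersetCard k, ∏ i ∈ t, x i

lemma esymFin_nonneg {m : ℕ} (s : Finset (Fin m)) (k : ℕ) (x : Fin m → ℝ)
    (hx : ∀ i, 0 ≤ x i) : 0 ≤ esymFin s k x :=
  Finset.sum_nonneg fun _ _ => Finset.prod_nonneg fun i _ => hx i

lemma esymFin_mono {m : ℕ} (s : Finset (Fin m)) (k : ℕ) {x y : Fin m → ℝ}
    (hy : ∀ i, 0 ≤ y i) (h : ∀ i, y i ≤ x i) : esymFin s k y ≤ esymFin s k x :=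
  Finset.sum_le_sum fun _ _ => Finset.prod_le_prod (fun i _ => hy i) (fun i _ => h i)

lemma esymFin_continuous {m : ℕ} (s : Finset (Fin m)) (k : ℕ) :
    Continuous (fun x : Fin m → ℝ => esymFin s k x) :=
  continuous_finset_sum _ fun _ _ => continuous_finset_prod _ fun i _ => continuous_apply i

lemma esymFin_zero {m : ℕ} (s : Finset (Fin m)) (k : ℕ) (hk : 1 ≤ k) :
    esymFin s k (fun _ => (0 : ℝ)) = 0 := by
  unfold esymFin
  refine Finset.sum_eq_zero fun t ht => ?_
  obtain ⟨i, hi⟩ := Finset.card_pos.mp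
    (by rw [(Finset.mem_powersetCard.mp ht).2]; exact hk)
  exact Finset.prod_eq_zero hi rfl

/-- The cone functional. -/
noncomputable def coneF (m : ℕ) (b : Fin m → ℝ) (j : Fin m) (x : Fin m → ℝ) : ℝ :=
  ∑ k : Fin m, b k / (m.choose (m - (k : ℕ)) : ℝ) *
    esymFin (Finset.univ.erase j) (m - (k : ℕ)) x

lemma coneF_continuous (m : ℕ) (b : Fin m → ℝ) (j : Fin m) :
    Continuous (coneF m b j) :=
  continuous_finset_sum _ fun k _ => continuous_const.mul (esymFin_continuous _ _)

lemma coneF_zero (m : ℕ) (b : Fin m → ℝ) (j : Fin m) :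
    coneF m b j (fun _ => 0) = 0 := by
  refine Finset.sum_eq_zero fun k _ => ?_
  rw [esymFin_zero _ _ (Nat.sub_pos_of_lt k.isLt), mul_zero]

lemma exists_pos_of_sum_pos' {α : Type*} {s : Finset α} {f : α → ℝ}
    (h : 0 < ∑ i ∈ s, f i) : ∃ i ∈ s, 0 < f i := by
  by_contra hc
  push_neg at hc
  exact absurd (Finset.sum_nonpos hc) (by linarith)

lemma coneF_strict {m : ℕ} (b : Fin m → ℝ) (hb : ∀ k, 0 ≤ b k) {γ : ℝ} (hγ : 0 < γ)
    (j : Fin m) (x : Fin m → ℝ) (hx : ∀ i, 0 ≤ x i) (h1 : coneF m b j x ≤ 1) :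
    coneF m b j (fun i => x i / (1 + γ * x i)) < 1 := by
  have hden : ∀ i, (1 : ℝ) < 1 + γ * x i ∨ 0 ≤ x i := fun i => Or.inr (hx i)
  have hφ0 : ∀ i, 0 ≤ x i / (1 + γ * x i) := fun i =>
    div_nonneg (hx i) (by nlinarith [mul_nonneg hγ.le (hx i)])
  have hφle : ∀ i, x i / (1 + γ * x i) ≤ x i := fun i =>
    div_le_self (hx i) (by nlinarith [mul_nonneg hγ.le (hx i)])
  have hc : ∀ k : Fin m, 0 ≤ b k / (m.choose (m - (k : ℕ)) : ℝ) := fun k =>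
    div_nonneg (hb k) (Nat.cast_nonneg _)
  have hle : coneF m b j (fun i => x i / (1 + γ * x i)) ≤ coneF m b j x :=
    Finset.sum_le_sum fun k _ =>
      mul_le_mul_of_nonneg_left (esymFin_mono _ _ hφ0 hφle) (hc k)
  rcases h1.lt_or_eq with h | h
  · exact lt_of_le_of_lt hle h
  · -- coneF m b j x = 1; find a strictly positive term and decrease it strictly
    have hsumpos : 0 < ∑ k : Fin m, b k / (m.choose (m - (k : ℕ)) : ℝ) *
        esymFin (Finset.univ.erase j) (m - (k : ℕ)) x := by
      rw [show (∑ k : Fin m, b k / (m.choose (m - (k : ℕ)) : ℝ) *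
        esymFin (Finset.univ.erase j) (m - (k : ℕ)) x) = coneF m b j x from rfl, h]
      norm_num
    obtain ⟨k, _, hk⟩ := exists_pos_of_sum_pos' hsumpos
    have hesym0 : 0 ≤ esymFin (Finset.univ.erase j) (m - (k : ℕ)) x :=
      esymFin_nonneg _ _ _ hx
    have hck : 0 < b k / (m.choose (m - (k : ℕ)) : ℝ) := by
      rcases (hc k).lt_or_eq with h' | h'
      · exact h'
      · exfalso; rw [← h', zero_mul] at hk; exact lt_irrefl _ hk
    have hek : 0 < esymFin (Finset.univ.erase j) (m - (k : ℕ)) x := by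
      by_contra hco
      push_neg at hco
      nlinarith
    -- find a subset with positive product
    obtain ⟨t, ht, htpos⟩ := exists_pos_of_sum_pos' hek
    have htsub := Finset.mem_powersetCard.mp ht
    have htne : t.Nonempty := Finset.card_pos.mp
      (by rw [htsub.2]; exact Nat.sub_pos_of_lt k.isLt)
    have hxt : ∀ i ∈ t, 0 < x i := by
      intro i hi
      rcases (hx i).lt_or_eq with h' | h'
      · exact h'
      · exfalso
        rw [Finset.prod_eq_zero hi h'.symm] at htpos
        exact lt_irrefl _ htpos
    have hprodlt : ∏ i ∈ t, x i / (1 + γ * x i) < ∏ i ∈ t, x i := by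
      refine Finset.prod_lt_prod_of_nonempty
        (fun i hi => div_pos (hxt i hi) (by nlinarith [hxt i hi])) ?_ htne
      intro i hi
      exact div_lt_self (hxt i hi) (by nlinarith [hxt i hi])
    have hesymlt : esymFin (Finset.univ.erase j) (m - (k : ℕ)) (fun i => x i / (1 + γ * x i))
        < esymFin (Finset.univ.erase j) (m - (k : ℕ)) x := by
      refine Finset.sum_lt_sum (fun t' _ => Finset.prod_le_prod
        (fun i _ => hφ0 i) (fun i _ => hφle i)) ⟨t, ht, hprodlt⟩
    have : coneF m b j (fun i => x i / (1 + γ * x i)) < coneF m b j x := by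
      refine Finset.sum_lt_sum (fun k' _ =>
        mul_le_mul_of_nonneg_left (esymFin_mono _ _ hφ0 hφle) (hc k')) ?_
      exact ⟨k, Finset.mem_univ k, mul_lt_mul_of_pos_left hesymlt hck⟩
    rw [h] at this
    exact this

lemma key {m : ℕ} (b : Fin m → ℝ) (hb : ∀ k, 0 ≤ b k) {γ : ℝ} (hγ : 0 < γ)
    (j : Fin m) :
    ∃ εj > (0 : ℝ), ∀ x : Fin m → ℝ, (∀ i, 0 ≤ x i) → (∀ i, x i ≤ γ⁻¹) →
      (∀ j' : Fin m, coneF m b j' x ≤ 1) →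
      coneF m b j (fun i => x i / (1 + γ * x i)) ≤ 1 - εj := by
  set K : Set (Fin m → ℝ) :=
    Set.Icc 0 (fun _ => γ⁻¹) ∩ ⋂ j' : Fin m, {x | coneF m b j' x ≤ 1} with hKdef
  have hKx : ∀ x ∈ K, (∀ i, 0 ≤ x i) ∧ (∀ i, x i ≤ γ⁻¹) ∧ ∀ j', coneF m b j' x ≤ 1 := by
    intro x hxK
    obtain ⟨⟨h0, h1⟩, h2⟩ := hxK
    simp only [Set.mem_iInter, Set.mem_setOf_eq] at h2
    exact ⟨fun i => h0 i, fun i => h1 i, h2⟩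
  have hKcpt : IsCompact K := by
    refine IsCompact.inter_right isCompact_Icc ?_
    exact isClosed_iInter fun j' =>
      isClosed_le (coneF_continuous m b j') continuous_const
  have hKne : K.Nonempty := by
    refine ⟨fun _ => 0, ⟨⟨fun i => le_refl _, fun i => inv_nonneg.mpr hγ.le⟩, ?_⟩⟩
    simp only [Set.mem_iInter, Set.mem_setOf_eq]
    intro j'
    rw [coneF_zero]
    norm_num
  -- continuity of the composed functional on K
  have hφcont : ContinuousOn (fun x : Fin m → ℝ => (fun i => x i / (1 + γ * x i))) K := by
    rw [continuousOn_pi]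
    intro i
    refine ContinuousOn.div (continuous_apply i).continuousOn
      (Continuous.continuousOn (by continuity)) ?_
    intro x hxK
    have := (hKx x hxK).1 i
    nlinarith [mul_nonneg hγ.le this]
  have hgcont : ContinuousOn (fun x : Fin m → ℝ =>
      coneF m b j (fun i => x i / (1 + γ * x i))) K :=
    (coneF_continuous m b j).comp_continuousOn hφcont
  obtain ⟨x₀, hx₀K, hmax⟩ := hKcpt.exists_isMaxOn hKne hgcont
  have hx₀ := hKx x₀ hx₀K
  have hlt : coneF m b j (fun i => x₀ i / (1 + γ * x₀ i)) < 1 :=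
    coneF_strict b hb hγ j x₀ hx₀.1 (hx₀.2.2 j)
  refine ⟨1 - coneF m b j (fun i => x₀ i / (1 + γ * x₀ i)), by linarith, ?_⟩
  intro x h0 h1 h2
  have hxK : x ∈ K := by
    refine ⟨⟨fun i => h0 i, fun i => h1 i⟩, ?_⟩
    simp only [Set.mem_iInter, Set.mem_setOf_eq]
    exact h2
  have := hmax hxK
  simp only [Set.mem_setOf_eq] at this
  linarith

/-- Uniform improvement of the cone condition: if positive reals `λ̃_i ≥ γ` satisfy the
non-strict cone condition, then `λ'_i = λ̃_i + γ` satisfy it with slack `ε'` depending only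
on `m`, the `b_k` and `γ`. -/
theorem stmt_15 (m : ℕ) (hm : 1 ≤ m) (b : Fin m → ℝ) (hb : ∀ k, 0 ≤ b k)
    (ε γ : ℝ) (hε : 0 < ε) (hγ : 0 < γ) :
    ∃ ε' > (0 : ℝ), ∀ lam : Fin m → ℝ, (∀ i, 0 < lam i) → (∀ i, γ ≤ lam i) →
      (∀ j : Fin m, ∑ k : Fin m,
          b k / (m.choose (m - (k : ℕ)) : ℝ) *
            esymFin (Finset.univ.erase j) (m - (k : ℕ)) (fun i => 1 / lam i) ≤ 1) →
      ∀ j : Fin m, ∑ k : Fin m,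
          b k / (m.choose (m - (k : ℕ)) : ℝ) *
            esymFin (Finset.univ.erase j) (m - (k : ℕ)) (fun i => 1 / (lam i + γ)) ≤ 1 - ε' := by
  have : ∀ j : Fin m, ∃ εj > (0 : ℝ), ∀ x : Fin m → ℝ, (∀ i, 0 ≤ x i) → (∀ i, x i ≤ γ⁻¹) →
      (∀ j' : Fin m, coneF m b j' x ≤ 1) →
      coneF m b j (fun i => x i / (1 + γ * x i)) ≤ 1 - εj := fun j => key b hb hγ j
  choose εf hεf hεf2 using this
  haveI : Nonempty (Fin m) := ⟨⟨0, hm⟩⟩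
  have hne : (Finset.univ : Finset (Fin m)).Nonempty := Finset.univ_nonempty
  refine ⟨Finset.univ.inf' hne εf, ?_, ?_⟩
  · exact (Finset.lt_inf'_iff hne).mpr fun j _ => hεf j
  · intro lam hpos hge hcone j
    set x : Fin m → ℝ := fun i => (lam i)⁻¹ with hxdef
    have hx0 : ∀ i, 0 ≤ x i := fun i => inv_nonneg.mpr (hpos i).le
    have hx1 : ∀ i, x i ≤ γ⁻¹ := fun i => inv_anti₀ hγ (hge i)
    have hxcone : ∀ j' : Fin m, coneF m b j' x ≤ 1 := by
      intro j'
      have := hcone j'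
      simp only [one_div] at this
      exact this
    have hkey := hεf2 j x hx0 hx1 hxcone
    have heq : (fun i => x i / (1 + γ * x i)) = fun i => 1 / (lam i + γ) := by
      funext i
      have h1 : lam i ≠ 0 := (hpos i).ne'
      have h2 : lam i + γ ≠ 0 := ne_of_gt (by linarith [hpos i])
      field_simp [hxdef]
      simp only [hxdef]
      field_simp
    rw [heq] at hkey
    have hle : Finset.univ.inf' hne εf ≤ εf j := Finset.inf'_le _ (Finset.mem_univ j)
    calc (∑ k : Fin m, b k / (m.choose (m - (k : ℕ)) : ℝ) *
            esymFin (Finset.univ.erase j) (m - (k : ℕ)) (fun i => 1 / (lam i + γ)))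
        = coneF m b j (fun i => 1 / (lam i + γ)) := rfl
      _ ≤ 1 - εf j := hkey
      _ ≤ 1 - Finset.univ.inf' hne εf := by linarith
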